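/- For any DAG G = (V,E) with n vertices there exists an r^top-visit ψ of G such that: (a) if d_out = 0, then b_{r^top}(ψ) = 0; (b) if d_out = 1, then b_{r^top}(ψ) = 1; and (c) if d_out ≤ D for some integer D ≥ 2, then b_{r^top}(ψ) ≤ ((D−1)/log₂ D)·log₂ n + 1. -/

import Mathlib

universe u

variable {V : Type u}

/-- Acyclicity of an edge relation (DAG condition). -/
def Acyclic (E : V → V → Prop) : Prop := ∀ v : V, ¬ Relation.TransGen E v v

/-- Immediate predecessors of a vertex. -/
def pre (E : V → V → Prop) (v : V) : Set V := {u | E u v}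

/-- Immediate successors of a vertex. -/
def suc (E : V → V → Prop) (v : V) : Set V := {u | E v u}

/-- The reverse DAG edge relation. -/
def Erev (E : V → V → Prop) : V → V → Prop := fun u v => E v u

/-- `r` is a visit rule for the DAG with edge relation `E`. -/
def VisitRule (E : V → V → Prop) (r : V → Set (Set V)) : Prop :=
  ∀ v : V, (r v).Nonempty ∧ ∀ Q ∈ r v, Q ⊆ pre E v

/-- `ψ` is an `r`-sequence. -/
def IsRSeq (r : V → Set (Set V)) (ψ : List V) : Prop :=
  ψ.Nodup ∧ ∀ i : Fin ψ.length, ∃ Q ∈ r (ψ.get i), ∀ u ∈ Q, u ∈ ψ.take i.1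

/-- `ψ` is an `r`-visit: an `r`-sequence containing all vertices. -/
def IsRVisit (r : V → Set (Set V)) (ψ : List V) : Prop :=
  IsRSeq r ψ ∧ ∀ v : V, v ∈ ψ

/-- The `r`-boundary of a sequence. -/
def boundary (r : V → Set (Set V)) (ψ : List V) : Set V :=
  {v | v ∉ ψ ∧ ∃ Q ∈ r v, Q ≠ (∅ : Set V) ∧ ∀ u ∈ Q, u ∈ ψ}

/-- The `r`-boundary complexity of a sequence. -/
noncomputable def bnd (r : V → Set (Set V)) (ψ : List V) : ℕ :=
  (Finset.Icc 1 ψ.length).sup fun i => (boundary r (ψ.take i)).ncard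

/-- The topological visit rule. -/
def rtop (E : V → V → Prop) : V → Set (Set V) := fun v => {pre E v}

/-- The maximum out-degree of a DAG. -/
noncomputable def doutMax [Fintype V] (E : V → V → Prop) : ℕ :=
  Finset.univ.sup fun v : V => (suc E v).ncard

section Dev
variable (E : V → V → Prop)

/-- `v` is ready w.r.t. visited set `S`. -/
def Ready (S : Set V) (v : V) : Prop := v ∉ S ∧ (pre E v).Nonempty ∧ pre E v ⊆ S

/-- The set of ready vertices. -/
def Bset (S : Set V) : Set V := {v | Ready E S v}

/-- Chain-reaction closure of a seed set `W` of ready vertices over visited set `S`. -/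
inductive InCL (S W : Set V) : V → Prop
  | seed {x : V} : x ∈ W → InCL S W x
  | rule {x : V} : x ∉ S → ¬ Ready E S x → (pre E x).Nonempty →
      (∀ u ∈ pre E x, u ∉ S → InCL S W u) → InCL S W x

def CL (S W : Set V) : Set V := {x | InCL E S W x}

def lset (L : List V) : Set V := {v | v ∈ L}

def TopoFrom : Set V → List V → Prop
  | _, [] => True
  | S, v :: L => pre E v ⊆ S ∧ TopoFrom (S ∪ {v}) L

variable {E}

@[simp] lemma lset_nil : lset ([] : List V) = ∅ := by ext v; simp [lset]
@[simp] lemma lset_cons (a : V) (l : List V) : lset (a :: l) = {a} ∪ lset l := by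
  ext v; simp [lset, or_comm]
@[simp] lemma lset_append (p q : List V) : lset (p ++ q) = lset p ∪ lset q := by
  ext v; simp [lset]
lemma mem_lset {v : V} {l : List V} : v ∈ lset l ↔ v ∈ l := Iff.rfl

@[simp] lemma topoFrom_nil {S : Set V} : TopoFrom E S [] := trivial
@[simp] lemma topoFrom_cons {S : Set V} {a : V} {l : List V} :
    TopoFrom E S (a :: l) ↔ pre E a ⊆ S ∧ TopoFrom E (S ∪ {a}) l := Iff.rfl

lemma topoFrom_append {S : Set V} {p q : List V} :
    TopoFrom E S (p ++ q) ↔ TopoFrom E S p ∧ TopoFrom E (S ∪ lset p) q := by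
  induction p generalizing S with
  | nil => simp
  | cons a t ih =>
      simp only [List.cons_append, topoFrom_cons, ih, lset_cons, and_assoc]
      have : S ∪ {a} ∪ lset t = S ∪ ({a} ∪ lset t) := by rw [Set.union_assoc]
      rw [this]

lemma topoFrom_mono {S S' : Set V} {L : List V} (hS : S ⊆ S') (h : TopoFrom E S L) :
    TopoFrom E S' L := by
  induction L generalizing S S' with
  | nil => trivial
  | cons a t ih =>
      obtain ⟨h1, h2⟩ := h
      exact ⟨h1.trans hS, ih (Set.union_subset_union_left _ hS) h2⟩

lemma Ready.mono {S S' : Set V} {v : V} (h : Ready E S v) (hSS : S ⊆ S') (hv : v ∉ S') :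
    Ready E S' v := ⟨hv, h.2.1, h.2.2.trans hSS⟩

/-- Elements of the closure avoid `S`, provided seeds do. -/
lemma InCL.not_in_base {S W : Set V} (hW : ∀ w ∈ W, w ∉ S) {x : V}
    (h : InCL E S W x) : x ∉ S := by
  induction h with
  | seed hx => exact hW _ hx
  | rule h1 _ _ _ _ => exact h1

/-- A closure element that is ready at `S` must be a seed. -/
lemma InCL.ready_mem_seed {S W : Set V} {x : V} (h : InCL E S W x) (hr : Ready E S x) :
    x ∈ W := by
  cases h with
  | seed hx => exact hx
  | rule _ h2 _ _ => exact absurd hr h2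

/-- Monotone in seeds. -/
lemma InCL.mono_seed {S W W' : Set V} (hWW : W ⊆ W') {x : V} (h : InCL E S W x) :
    InCL E S W' x := by
  induction h with
  | seed hx => exact .seed (hWW hx)
  | rule h1 h2 h3 _ ih => exact .rule h1 h2 h3 fun u hu hu' => ih u hu hu'

end Dev
section Dev2
variable {E : V → V → Prop}

/-- A finite nonempty set has an `E`-minimal element (acyclicity). -/
lemma exists_min [Finite V] (hG : Acyclic E) {I : Set V} (hI : I.Nonempty) :
    ∃ x ∈ I, ∀ u ∈ I, ¬ E u x := by
  haveI : IsTrans V (Relation.TransGen E) := ⟨fun _ _ _ => Relation.TransGen.trans⟩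
  haveI : IsIrrefl V (Relation.TransGen E) := ⟨hG⟩
  obtain ⟨x, hx, hmin⟩ :=
    (Finite.wellFounded_of_trans_of_irrefl (Relation.TransGen E)).has_min I hI
  exact ⟨x, hx, fun u hu he => hmin u hu (Relation.TransGen.single he)⟩

/-- Closures of distinct ready seeds are disjoint. -/
lemma cl_disjoint [Finite V] (hG : Acyclic E) {S : Set V} {w₁ w₂ : V}
    (h₁ : Ready E S w₁) (h₂ : Ready E S w₂) (hne : w₁ ≠ w₂) :
    CL E S {w₁} ∩ CL E S {w₂} = ∅ := by
  by_contra h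
  obtain ⟨x, hx, hmin⟩ := exists_min hG (Set.nonempty_iff_ne_empty.2 h)
  obtain ⟨hx1, hx2⟩ := hx
  cases hx1 with
  | seed h => -- x = w₁
    rw [Set.mem_singleton_iff] at h; subst h
    have := hx2.ready_mem_seed h₁
    exact hne (Set.mem_singleton_iff.1 this)
  | rule ha1 ha2 ha3 ha4 =>
    cases hx2 with
    | seed h =>
      rw [Set.mem_singleton_iff] at h; subst h
      exact ha2 h₂
    | rule hb1 hb2 hb3 hb4 =>
      -- every predecessor of x is in S
      have hpre : pre E x ⊆ S := by
        intro u hu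
        by_contra hus
        exact hmin u ⟨ha4 u hu hus, hb4 u hu hus⟩ hu
      exact ha2 ⟨ha1, ha3, hpre⟩

/-- Newly ready vertices after visiting `w`. -/
def NW (E : V → V → Prop) (S : Set V) (w : V) : Set V :=
  {x | Ready E (S ∪ {w}) x ∧ ¬ Ready E S x}

lemma nw_subset_suc {S : Set V} {w : V} : NW E S w ⊆ suc E w := by
  rintro x ⟨⟨hx1, hx2, hx3⟩, hx4⟩
  by_contra hs
  exact hx4 ⟨fun h => hx1 (Set.mem_union_left _ h), hx2, fun u hu =>
    (hx3 hu).resolve_right (by rintro rfl; exact hs hu)⟩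

/-- STEP: the closure of a single ready seed decomposes. -/
lemma cl_step {S : Set V} {w : V} (hw : Ready E S w) :
    CL E S {w} = {w} ∪ CL E (S ∪ {w}) (NW E S w) := by
  apply Set.eq_of_subset_of_subset
  · intro x hx
    induction hx with
    | @seed y h => exact Or.inl h
    | @rule y h1 h2 h3 h4 ih =>
      have hxw : y ≠ w := by rintro rfl; exact h2 hw
      right
      by_cases hr : Ready E (S ∪ {w}) y
      · exact .seed ⟨hr, h2⟩
      · refine .rule ?_ hr h3 ?_
        · simp only [Set.mem_union, Set.mem_singleton_iff]
          rintro (h | rfl); exacts [h1 h, hxw rfl]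
        · intro u hu hus
          have hunotS : u ∉ S := fun h => hus (Set.mem_union_left _ h)
          have := ih u hu hunotS
          rcases this with h | h
          · exact absurd (Set.mem_union_right _ h) hus
          · exact h
  · rintro x (hx | hx)
    · exact .seed hx
    · induction hx with
      | @seed y h =>
        obtain ⟨⟨h1, h2, h3⟩, h4⟩ := h
        refine .rule (fun hs => h1 (Set.mem_union_left _ hs)) h4 h2 ?_
        intro u hu hus
        have := h3 hu
        rcases this with h | h
        · exact absurd h hus
        · exact .seed h
      | @rule y h1 h2 h3 h4 ih =>
        have hxS : y ∉ S := fun h => h1 (Set.mem_union_left _ h)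
        have hnr : ¬ Ready E S y := fun hr => h2 (hr.mono Set.subset_union_left h1)
        refine .rule hxS hnr h3 ?_
        intro u hu hus
        by_cases huw : u = w
        · exact .seed (by simp [huw])
        · exact ih u hu (by rintro (h | h); exacts [hus h, huw h])

/-- SPLIT: processing one seed's closure first. -/
lemma cl_split {S W : Set V} {w : V} (hW : ∀ v ∈ W, Ready E S v) (hw : w ∈ W) :
    CL E S W = CL E S {w} ∪ CL E (S ∪ CL E S {w}) (W \ {w}) := by
  apply Set.eq_of_subset_of_subset
  · intro x hx
    induction hx with
    | @seed y h =>
      by_cases hxw : y = w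
      · exact Or.inl (.seed (by simp [hxw]))
      · exact Or.inr (.seed ⟨h, hxw⟩)
    | @rule y h1 h2 h3 h4 ih =>
      by_cases hxc : y ∈ CL E S {w}
      · exact Or.inl hxc
      · right
        have hxSc : y ∉ S ∪ CL E S {w} := by
          rintro (h | h); exacts [h1 h, hxc h]
        by_cases hr : Ready E (S ∪ CL E S {w}) y
        · -- then x would be in CL E S {w} by its rule
          exact absurd (InCL.rule h1 h2 h3 (fun u hu hus =>
            (hr.2.2 hu).resolve_left hus)) hxc
        · refine .rule hxSc hr h3 ?_
          intro u hu hus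
          have huS : u ∉ S := fun h => hus (Set.mem_union_left _ h)
          rcases ih u hu huS with h | h
          · exact absurd (Set.mem_union_right _ h) hus
          · exact h
  · rintro x (hx | hx)
    · exact hx.mono_seed (by simpa using hw)
    · induction hx with
      | @seed y h => exact .seed h.1
      | @rule y h1 h2 h3 h4 ih =>
        have hxS : y ∉ S := fun h => h1 (Set.mem_union_left _ h)
        have hnr : ¬ Ready E S y := fun hr => h2 (hr.mono Set.subset_union_left h1)
        refine .rule hxS hnr h3 ?_
        intro u hu hus
        by_cases huc : u ∈ CL E S {w}
        · exact huc.mono_seed (by simpa using hw)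
        · exact ih u hu (by rintro (h | h); exacts [hus h, huc h])

end Dev2
section Dev3
variable {E : V → V → Prop}

lemma bset_step {S : Set V} {w : V} (hw : Ready E S w) :
    Bset E (S ∪ {w}) \ NW E S w = Bset E S \ {w} := by
  ext x
  simp only [Set.mem_diff, Bset, Set.mem_setOf_eq, NW, Set.mem_singleton_iff]
  constructor
  · rintro ⟨h1, h2⟩
    have hr : Ready E S x := by
      by_contra hc; exact h2 ⟨h1, hc⟩
    exact ⟨hr, fun h => h1.1 (Set.mem_union_right _ (by simp [h]))⟩
  · rintro ⟨h1, h2⟩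
    have hx : x ∉ S ∪ {w} := by
      rintro (h | h); exacts [h1.1 h, h2 h]
    exact ⟨h1.mono Set.subset_union_left hx, fun h => h.2 h1⟩

lemma bset_closure_single {S : Set V} {w : V} (hw : Ready E S w) :
    Bset E (S ∪ CL E S {w}) = Bset E S \ {w} := by
  ext x
  simp only [Bset, Set.mem_setOf_eq, Set.mem_diff, Set.mem_singleton_iff]
  constructor
  · intro hr
    by_cases hRS : Ready E S x
    · refine ⟨hRS, fun h => hr.1 (Set.mem_union_right _ (h ▸ InCL.seed rfl))⟩
    · exfalso
      have hxS : x ∉ S := fun h => hr.1 (Set.mem_union_left _ h)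
      have : InCL E S {w} x := by
        refine .rule hxS hRS hr.2.1 ?_
        intro u hu hus
        exact (hr.2.2 hu).resolve_left hus
      exact hr.1 (Set.mem_union_right _ this)
  · rintro ⟨h1, h2⟩
    have hx : x ∉ S ∪ CL E S {w} := by
      rintro (h | h)
      · exact h1.1 h
      · exact h2 (Set.mem_singleton_iff.1 (h.ready_mem_seed h1))
    exact h1.mono Set.subset_union_left hx

lemma bset_closure_full {S W : Set V} (hall : Bset E S ⊆ W) :
    Bset E (S ∪ CL E S W) = ∅ := by
  ext x
  simp only [Set.mem_empty_iff_false, iff_false, Bset, Set.mem_setOf_eq]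
  intro hr
  by_cases hRS : Ready E S x
  · exact hr.1 (Set.mem_union_right _ (.seed (hall hRS)))
  · have hxS : x ∉ S := fun h => hr.1 (Set.mem_union_left _ h)
    refine hr.1 (Set.mem_union_right _ (.rule hxS hRS hr.2.1 ?_))
    intro u hu hus
    exact (hr.2.2 hu).resolve_left hus

lemma ncard_suc_le_doutMax [Fintype V] (v : V) : (suc E v).ncard ≤ doutMax E :=
  Finset.le_sup (f := fun v => (suc E v).ncard) (Finset.mem_univ v)

lemma exists_source [Finite V] (hG : Acyclic E) {S : Set V} (hne : Sᶜ.Nonempty) :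
    ∃ s, s ∉ S ∧ pre E s ⊆ S := by
  obtain ⟨s, hs, hmin⟩ := exists_min hG hne
  refine ⟨s, hs, fun u hu => ?_⟩
  by_contra hus
  exact hmin u hus hu

/-- Choosing a seed with minimal closure: `|W| * |CL {w}| ≤ |CL W|`. -/
lemma exists_min_closure [Fintype V] (hG : Acyclic E) {S W : Set V}
    (hW : ∀ w ∈ W, Ready E S w) (hne : W.Nonempty) :
    ∃ w ∈ W, W.ncard * (CL E S {w}).ncard ≤ (CL E S W).ncard := by
  classical
  have hWfin : W.Finite := Set.toFinite W
  obtain ⟨w, hwmem, hmin⟩ := Finset.exists_min_image hWfin.toFinset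
    (fun w => (CL E S {w}).ncard) (hWfin.toFinset_nonempty.2 hne)
  rw [Set.Finite.mem_toFinset] at hwmem
  refine ⟨w, hwmem, ?_⟩
  set f : V → Finset V := fun w' => (Set.toFinite (CL E S {w'})).toFinset with hf
  have hdisj : ∀ a ∈ hWfin.toFinset, ∀ b ∈ hWfin.toFinset, a ≠ b → Disjoint (f a) (f b) := by
    intro a ha b hb hab
    rw [Set.Finite.mem_toFinset] at ha hb
    rw [Finset.disjoint_left]
    intro x hxa hxb
    rw [hf] at hxa hxb
    simp only [Set.Finite.mem_toFinset] at hxa hxb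
    have := cl_disjoint hG (hW a ha) (hW b hb) hab
    exact absurd (Set.mem_inter hxa hxb) (by rw [this]; exact Set.notMem_empty x)
  have hcard := Finset.card_biUnion hdisj
  have hsub : hWfin.toFinset.biUnion f ⊆ (Set.toFinite (CL E S W)).toFinset := by
    intro x hx
    rw [Finset.mem_biUnion] at hx
    obtain ⟨a, ha, hxa⟩ := hx
    rw [Set.Finite.mem_toFinset] at ha ⊢
    rw [hf] at hxa; simp only [Set.Finite.mem_toFinset] at hxa
    exact hxa.mono_seed (by simpa using ha)
  have hge : hWfin.toFinset.card * (CL E S {w}).ncard ≤ (hWfin.toFinset.biUnion f).card := by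
    rw [hcard]
    have := Finset.card_nsmul_le_sum hWfin.toFinset (fun a => (f a).card) ((CL E S {w}).ncard)
      (fun a ha => by
        simp only [hf, ← Set.ncard_eq_toFinset_card]
        exact hmin a ha)
    simpa [smul_eq_mul] using this
  calc W.ncard * (CL E S {w}).ncard = hWfin.toFinset.card * (CL E S {w}).ncard := by
        rw [Set.ncard_eq_toFinset_card W hWfin]
    _ ≤ (hWfin.toFinset.biUnion f).card := hge
    _ ≤ (Set.toFinite (CL E S W)).toFinset.card := Finset.card_le_card hsub
    _ = (CL E S W).ncard := by rw [Set.ncard_eq_toFinset_card]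

end Dev3
section Dev4

lemma log_ge_one_sub_inv {x : ℝ} (hx : 0 < x) : 1 - x⁻¹ ≤ Real.log x := by
  have h := Real.log_le_sub_one_of_pos (inv_pos.2 hx)
  rw [Real.log_inv] at h; linarith

lemma key1 (j D : ℕ) (h2 : 2 ≤ j) (hjD : j ≤ D) :
    ((j : ℝ) - 1) * Real.log D ≤ ((D : ℝ) - 1) * Real.log j := by
  induction D, hjD using Nat.le_induction with
  | base => exact le_refl _
  | succ D hD ih =>
    have hj1 : (1:ℝ) ≤ (j:ℝ) := by exact_mod_cast Nat.one_le_of_lt h2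
    have hjpos : (0:ℝ) < (j:ℝ) := by linarith
    have hDj : (j:ℝ) ≤ (D:ℝ) := by exact_mod_cast hD
    have hDpos : (0:ℝ) < (D:ℝ) := by linarith
    -- log (D+1) ≤ log D + 1/D
    have hstep : Real.log ((D:ℝ) + 1) ≤ Real.log D + 1 / D := by
      have hq : Real.log (((D:ℝ) + 1) / D) ≤ ((D:ℝ) + 1) / D - 1 :=
        Real.log_le_sub_one_of_pos (by positivity)
      rw [Real.log_div (by linarith) (ne_of_gt hDpos)] at hq
      have : ((D:ℝ) + 1) / D - 1 = 1 / D := by field_simp; ring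
      linarith [this ▸ hq]
    -- (j - 1) ≤ D * log j
    have hlogj : ((j:ℝ) - 1) / j ≤ Real.log j := by
      have := log_ge_one_sub_inv hjpos
      have hh : 1 - (j:ℝ)⁻¹ = ((j:ℝ) - 1) / j := by field_simp
      linarith [hh ▸ this]
    have hlogj_nonneg : 0 ≤ Real.log j := Real.log_nonneg hj1
    have hDlogj : (j:ℝ) - 1 ≤ (D:ℝ) * Real.log j := by
      have h1 : ((j:ℝ) - 1) ≤ (j:ℝ) * Real.log j := by
        have := mul_le_mul_of_nonneg_left hlogj (le_of_lt hjpos)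
        rw [mul_div_cancel₀] at this
        · linarith
        · exact ne_of_gt hjpos
      have h2' : (j:ℝ) * Real.log j ≤ (D:ℝ) * Real.log j :=
        mul_le_mul_of_nonneg_right hDj hlogj_nonneg
      linarith
    have hcast : ((D:ℕ) + 1 : ℕ) = ((D:ℝ) + 1) := by push_cast; ring
    push_cast
    have hjm1 : (0:ℝ) ≤ (j:ℝ) - 1 := by linarith
    calc ((j:ℝ) - 1) * Real.log ((D:ℝ) + 1)
        ≤ ((j:ℝ) - 1) * (Real.log D + 1 / D) :=
          mul_le_mul_of_nonneg_left hstep hjm1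
      _ = ((j:ℝ) - 1) * Real.log D + ((j:ℝ) - 1) / D := by ring
      _ ≤ ((D:ℝ) - 1) * Real.log j + ((j:ℝ) - 1) / D := by linarith [ih]
      _ ≤ ((D:ℝ) - 1) * Real.log j + Real.log j := by
          have : ((j:ℝ) - 1) / D ≤ Real.log j := by
            rw [div_le_iff₀ hDpos]
            linarith [hDlogj]
          linarith
      _ = ((D:ℝ) + 1 - 1) * Real.log j := by ring

lemma one_le_prod (J : List ℕ) (h : ∀ j ∈ J, 1 ≤ j) : 1 ≤ J.prod := by
  induction J with
  | nil => simp
  | cons a t ih =>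
    simp only [List.prod_cons]
    calc 1 = 1 * 1 := (one_mul 1).symm
    _ ≤ a * t.prod := Nat.mul_le_mul (h a (by simp)) (ih fun j hj => h j (by simp [hj]))

lemma sum_bound (D : ℕ) (hD : 2 ≤ D) (J : List ℕ) (hJ : ∀ j ∈ J, 2 ≤ j ∧ j ≤ D) :
    ((((J.map (fun j => j - 1)).sum : ℕ)) : ℝ) * Real.log D
      ≤ ((D : ℝ) - 1) * Real.log ((J.prod : ℕ) : ℝ) := by
  induction J with
  | nil =>
    simp only [List.map_nil, List.sum_nil, List.prod_nil, Nat.cast_zero, Nat.cast_one,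
      Real.log_one, zero_mul, mul_zero]
    exact le_refl 0
  | cons a t ih =>
    have ha := hJ a (by simp)
    have ht : ∀ j ∈ t, 2 ≤ j ∧ j ≤ D := fun j hj => hJ j (by simp [hj])
    have hprodt : 1 ≤ t.prod := one_le_prod t fun j hj => le_trans (by norm_num) (ht j hj).1
    have hane : ((a:ℝ)) ≠ 0 := by
      have : (2:ℝ) ≤ (a:ℝ) := by exact_mod_cast ha.1
      linarith
    have htne : ((t.prod : ℕ) : ℝ) ≠ 0 := by
      have : (1:ℝ) ≤ ((t.prod : ℕ) : ℝ) := by exact_mod_cast hprodt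
      linarith
    have hcast : (((a :: t).prod : ℕ) : ℝ) = (a:ℝ) * ((t.prod : ℕ) : ℝ) := by
      rw [List.prod_cons]; push_cast; ring
    have hsumN : ((a :: t).map (fun j => j - 1)).sum
        = (a - 1) + (t.map (fun j => j - 1)).sum := by simp
    have hsum : ((((a :: t).map (fun j => j - 1)).sum : ℕ) : ℝ)
        = ((a:ℝ) - 1) + (((t.map (fun j => j - 1)).sum : ℕ) : ℝ) := by
      rw [hsumN, Nat.cast_add, Nat.cast_sub (le_trans (by norm_num) ha.1), Nat.cast_one]
    rw [hcast, hsum, Real.log_mul hane htne]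
    have h1 := key1 a D ha.1 ha.2
    have h2 := ih ht
    rw [add_mul]
    nlinarith [h1, h2]

/-- Certificate for the boundary size. -/
def Cert (dmax n base b : ℕ) : Prop :=
  ∃ (J : List ℕ) (ε : ℕ), ε ≤ 1 ∧ (∀ j ∈ J, 2 ≤ j ∧ j ≤ dmax) ∧ J.prod ≤ max n 1 ∧
    b ≤ base + ε + (J.map (fun j => j - 1)).sum

lemma Cert.weaken {dmax n n' base base' b : ℕ} (h : Cert dmax n base b)
    (hn : n ≤ n') (hb : base ≤ base') : Cert dmax n' base' b := by
  obtain ⟨J, ε, h1, h2, h3, h4⟩ := h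
  exact ⟨J, ε, h1, h2, h3.trans (by omega), h4.trans (by omega)⟩

end Dev4
section Dev5
variable {E : V → V → Prop}

lemma cl_empty {S : Set V} : CL E S (∅ : Set V) = ∅ := by
  ext x
  simp only [Set.mem_empty_iff_false, iff_false]
  intro hx
  induction hx with
  | seed h => exact h
  | @rule y h1 h2 h3 h4 ih =>
    refine h2 ⟨h1, h3, fun u hu => ?_⟩
    by_contra hus
    exact ih u hu hus

lemma cl_nonempty_mem {S W : Set V} {w : V} (hw : w ∈ W) : w ∈ CL E S W := .seed hw

lemma rec_main [Fintype V] (hG : Acyclic E) :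
    ∀ (m : ℕ) (S W : Set V), Sᶜ.ncard ≤ m → (∀ w ∈ W, Ready E S w) →
      W.ncard ≤ doutMax E →
      ∃ L : List V, L.Nodup ∧ (∀ v, v ∈ L ↔ v ∈ CL E S W) ∧ TopoFrom E S L ∧
        ∀ p q : List V, L = p ++ q →
          Cert (doutMax E) ((CL E S W).ncard) ((Bset E S \ W).ncard)
            ((Bset E (S ∪ lset p)).ncard) := by
  intro m
  induction m with
  | zero =>
    intro S W hm hW hWc
    have hSc : Sᶜ = ∅ := by
      rw [← Set.ncard_eq_zero (Set.toFinite _)]; omega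
    have hWe : W = ∅ := by
      ext w
      simp only [Set.mem_empty_iff_false, iff_false]
      intro hw
      have h1 : w ∈ Sᶜ := (hW w hw).1
      rw [hSc] at h1; exact h1
    subst hWe
    refine ⟨[], by simp, by simp [cl_empty], by simp, ?_⟩
    rintro p q hpq
    obtain ⟨rfl, rfl⟩ : p = [] ∧ q = [] := by
      constructor
      · exact (List.append_eq_nil_iff.1 hpq.symm).1
      · exact (List.append_eq_nil_iff.1 hpq.symm).2
    refine ⟨[], 0, by norm_num, by simp, by simp, ?_⟩
    simp only [lset_nil, Set.union_empty, Set.diff_empty, List.map_nil, List.sum_nil]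
    omega
  | succ m ih =>
    intro S W hm hW hWc
    rcases Set.eq_empty_or_nonempty W with rfl | hWne
    · refine ⟨[], by simp, by simp [cl_empty], by simp, ?_⟩
      rintro p q hpq
      obtain rfl : p = [] := (List.append_eq_nil_iff.1 hpq.symm).1
      refine ⟨[], 0, by norm_num, by simp, by simp, ?_⟩
      simp only [lset_nil, Set.union_empty, Set.diff_empty, List.map_nil, List.sum_nil]
      omega
    obtain ⟨w, hw, hprod⟩ := exists_min_closure hG hW hWne
    have hwR : Ready E S w := hW w hw
    set k := W.ncard with hk
    have hk1 : 1 ≤ k := (Set.ncard_pos (Set.toFinite W)).2 hWne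
    set Cw := CL E S {w} with hCw
    set S₁ := S ∪ {w} with hS₁
    set W₁ := NW E S w with hW₁
    set S₂ := S ∪ Cw with hS₂
    set W₂ := W \ {w} with hW₂def
    have hstep : Cw = {w} ∪ CL E S₁ W₁ := cl_step hwR
    have hsplit : CL E S W = Cw ∪ CL E S₂ W₂ := cl_split hW hw
    have hwS : w ∉ S := hwR.1
    have hwSc : w ∈ Sᶜ := hwS
    have hm₁ : (S₁ᶜ).ncard ≤ m := by
      have hset : S₁ᶜ = Sᶜ \ {w} := by
        rw [hS₁]; ext x; simp [Set.mem_compl_iff, and_comm]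
      rw [hset, Set.ncard_diff_singleton_of_mem hwSc]
      omega
    have hW₁R : ∀ v ∈ W₁, Ready E S₁ v := fun v hv => hv.1
    have hW₁c : W₁.ncard ≤ doutMax E :=
      le_trans (Set.ncard_le_ncard nw_subset_suc (Set.toFinite _)) (ncard_suc_le_doutMax w)
    obtain ⟨L₁, hnd₁, hmem₁, htop₁, hcert₁⟩ := ih S₁ W₁ hm₁ hW₁R hW₁c
    have hL₁ : lset L₁ = CL E S₁ W₁ := Set.ext fun v => hmem₁ v
    have hnb₁ : ∀ x ∈ CL E S₁ W₁, x ∉ S₁ :=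
      fun x hx => hx.not_in_base (fun v hv => (hW₁R v hv).1)
    have hwCw : w ∈ Cw := cl_nonempty_mem rfl
    have hm₂ : (S₂ᶜ).ncard ≤ m := by
      have hsub : S₂ᶜ ⊆ Sᶜ \ {w} := by
        intro x hx
        refine ⟨fun h => hx (Set.mem_union_left _ h), fun h => hx (by
          rw [Set.mem_singleton_iff] at h
          exact Set.mem_union_right _ (h ▸ hwCw))⟩
      calc (S₂ᶜ).ncard ≤ (Sᶜ \ {w}).ncard := Set.ncard_le_ncard hsub (Set.toFinite _)
        _ = Sᶜ.ncard - 1 := Set.ncard_diff_singleton_of_mem hwSc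
        _ ≤ m := by omega
    have hW₂R : ∀ v ∈ W₂, Ready E S₂ v := by
      rintro v ⟨hvW, hvw⟩
      refine (hW v hvW).mono Set.subset_union_left ?_
      rintro (h | h)
      · exact (hW v hvW).1 h
      · exact hvw (Set.mem_singleton_iff.2 (Set.mem_singleton_iff.1 (h.ready_mem_seed (hW v hvW))))
    have hW₂c : W₂.ncard ≤ doutMax E :=
      le_trans (Set.ncard_le_ncard Set.diff_subset (Set.toFinite _)) hWc
    obtain ⟨L₂, hnd₂, hmem₂, htop₂, hcert₂⟩ := ih S₂ W₂ hm₂ hW₂R hW₂c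
    have hL₂ : lset L₂ = CL E S₂ W₂ := Set.ext fun v => hmem₂ v
    have hnb₂ : ∀ x ∈ CL E S₂ W₂, x ∉ S₂ :=
      fun x hx => hx.not_in_base (fun v hv => (hW₂R v hv).1)
    have hstate : S₁ ∪ lset L₁ = S₂ := by
      rw [hL₁, hS₂, hstep, hS₁, Set.union_assoc]
    refine ⟨w :: L₁ ++ L₂, ?_, ?_, ?_, ?_⟩
    · -- Nodup
      refine List.nodup_cons.2 ⟨?_, List.Nodup.append hnd₁ hnd₂ ?_⟩
      · intro hmem
        rcases List.mem_append.1 hmem with h | h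
        · exact hnb₁ w ((hmem₁ w).1 h) (Set.mem_union_right _ rfl)
        · exact hnb₂ w ((hmem₂ w).1 h) (Set.mem_union_right _ hwCw)
      · intro a ha hb
        have ha' := (hmem₁ a).1 ha
        have hb' := (hmem₂ a).1 hb
        exact hnb₂ a hb' (Set.mem_union_right _ (hstep ▸ Set.mem_union_right _ ha'))
    · -- membership
      intro v
      rw [hsplit, hstep]
      constructor
      · intro hv
        rcases List.mem_cons.1 hv with rfl | hv
        · exact Or.inl (Or.inl rfl)
        · rcases List.mem_append.1 hv with h | h
          · exact Or.inl (Or.inr ((hmem₁ v).1 h))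
          · exact Or.inr ((hmem₂ v).1 h)
      · rintro ((h | h) | h)
        · exact List.mem_cons.2 (Or.inl h)
        · exact List.mem_cons.2 (Or.inr (List.mem_append.2 (Or.inl ((hmem₁ v).2 h))))
        · exact List.mem_cons.2 (Or.inr (List.mem_append.2 (Or.inr ((hmem₂ v).2 h))))
    · -- topological
      have h2 : TopoFrom E (S₁ ∪ lset L₁) L₂ := hstate ▸ htop₂
      exact ⟨hwR.2.2, topoFrom_append.2 ⟨htop₁, h2⟩⟩
    · -- certificate
      intro p q hpq
      rcases p with _ | ⟨a, p'⟩
      · -- empty prefix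
        simp only [lset_nil, Set.union_empty]
        have hsub : Bset E S ⊆ (Bset E S \ W) ∪ W := by
          intro x hx
          by_cases h : x ∈ W
          · exact Or.inr h
          · exact Or.inl ⟨hx, h⟩
        have hb : (Bset E S).ncard ≤ (Bset E S \ W).ncard + k := by
          calc (Bset E S).ncard ≤ ((Bset E S \ W) ∪ W).ncard :=
                Set.ncard_le_ncard hsub (Set.toFinite _)
            _ ≤ (Bset E S \ W).ncard + W.ncard := Set.ncard_union_le _ _
        have hkn : k ≤ (CL E S W).ncard :=
          Set.ncard_le_ncard (fun v hv => cl_nonempty_mem hv) (Set.toFinite _)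
        by_cases hk2 : 2 ≤ k
        · refine ⟨[k], 1, le_refl 1, ?_, ?_, ?_⟩
          · intro j hj
            rw [List.mem_singleton] at hj
            subst hj; exact ⟨hk2, hWc⟩
          · simp only [List.prod_cons, List.prod_nil, mul_one]
            exact le_trans hkn (le_max_left _ _)
          · simp only [List.map_cons, List.map_nil, List.sum_cons, List.sum_nil]
            omega
        · refine ⟨[], 1, le_refl 1, by simp, ?_, ?_⟩
          · simp only [List.prod_nil]
            exact le_max_right _ 1
          · simp only [List.map_nil, List.sum_nil]
            omega
      · -- nonempty prefix: a = w
        rw [List.cons_append] at hpq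
        injection hpq with ha hpq'
        subst ha
        have hbs₁ : Bset E S₁ \ W₁ = Bset E S \ {w} := bset_step hwR
        have hbs₂ : Bset E S₂ = Bset E S \ {w} := bset_closure_single hwR
        have hdiffeq : (Bset E S \ {w}) \ W₂ = Bset E S \ W := by
          ext x
          simp only [Set.mem_diff, hW₂def, Set.mem_singleton_iff, not_and, not_not]
          constructor
          · rintro ⟨⟨h1, h2⟩, h3⟩
            exact ⟨h1, fun h => h2 (h3 h)⟩
          · rintro ⟨h1, h2⟩
            exact ⟨⟨h1, fun h => h2 (h ▸ hw)⟩, fun h => absurd h h2⟩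
        have hcard_diff : (Bset E S \ {w}).ncard ≤ (Bset E S \ W).ncard + (k - 1) := by
          have hsub : Bset E S \ {w} ⊆ (Bset E S \ W) ∪ (W \ {w}) := by
            rintro x ⟨hx, hxw⟩
            by_cases h : x ∈ W
            · exact Or.inr ⟨h, hxw⟩
            · exact Or.inl ⟨hx, h⟩
          have h2 : (W \ {w}).ncard = k - 1 := by
            rw [hk]; exact Set.ncard_diff_singleton_of_mem hw
          calc (Bset E S \ {w}).ncard ≤ ((Bset E S \ W) ∪ (W \ {w})).ncard :=
                Set.ncard_le_ncard hsub (Set.toFinite _)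
            _ ≤ (Bset E S \ W).ncard + (W \ {w}).ncard := Set.ncard_union_le _ _
            _ = (Bset E S \ W).ncard + (k - 1) := by rw [h2]
        have hCw_card : Cw.ncard = (CL E S₁ W₁).ncard + 1 := by
          rw [hstep]
          have hwnot : w ∉ CL E S₁ W₁ := fun h => hnb₁ w h (Set.mem_union_right _ rfl)
          rw [Set.union_comm, Set.union_singleton,
            Set.ncard_insert_of_notMem hwnot (Set.toFinite _)]
        have hCw_le : k * Cw.ncard ≤ (CL E S W).ncard := hprod
        have hCL₂_le : (CL E S₂ W₂).ncard ≤ (CL E S W).ncard := by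
          apply Set.ncard_le_ncard _ (Set.toFinite _)
          rw [hsplit]; exact Set.subset_union_right
        have hCw_le' : Cw.ncard ≤ (CL E S W).ncard := by
          apply Set.ncard_le_ncard _ (Set.toFinite _)
          rw [hsplit]; exact Set.subset_union_left
        rcases List.append_eq_append_iff.1 hpq' with ⟨c', hc1, hc2⟩ | ⟨a', ha1, ha2⟩
        · -- continuation case: p' = L₁ ++ c', L₂ = c' ++ q
          obtain ⟨J₂, ε₂, he₂, hj₂, hp₂, hb₂⟩ := hcert₂ c' q hc2
          have hstate' : S ∪ lset (w :: p') = S₂ ∪ lset c' := by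
            rw [lset_cons, hc1, lset_append, ← hstate, hS₁]
            simp [Set.union_assoc, Set.insert_union]
          rw [hstate']
          refine ⟨J₂, ε₂, he₂, hj₂, ?_, ?_⟩
          · exact le_trans hp₂ (max_le_max hCL₂_le (le_refl 1))
          · rw [hbs₂, hdiffeq] at hb₂
            exact hb₂
        · -- prefix of L₁ : L₁ = p' ++ a'
          obtain ⟨J₁, ε₁, he₁, hj₁, hp₁, hb₁⟩ := hcert₁ p' a' ha1
          have hstate' : S ∪ lset (w :: p') = S₁ ∪ lset p' := by
            rw [lset_cons, hS₁, Set.union_assoc]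
          rw [hstate']
          have hJ₁le : J₁.prod ≤ Cw.ncard := by
            calc J₁.prod ≤ max (CL E S₁ W₁).ncard 1 := hp₁
              _ ≤ Cw.ncard := by
                  rw [hCw_card]
                  exact max_le (Nat.le_succ _) (by omega)
          rw [hbs₁] at hb₁
          by_cases hk2 : 2 ≤ k
          · refine ⟨k :: J₁, ε₁, he₁, ?_, ?_, ?_⟩
            · intro j hj
              rcases List.mem_cons.1 hj with rfl | hj
              · exact ⟨hk2, hWc⟩
              · exact hj₁ j hj
            · rw [List.prod_cons]
              calc k * J₁.prod ≤ k * Cw.ncard := Nat.mul_le_mul_left k hJ₁le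
                _ ≤ (CL E S W).ncard := hCw_le
                _ ≤ max (CL E S W).ncard 1 := le_max_left _ _
            · simp only [List.map_cons, List.sum_cons]
              omega
          · refine ⟨J₁, ε₁, he₁, hj₁, ?_, ?_⟩
            · calc J₁.prod ≤ Cw.ncard := hJ₁le
                _ ≤ (CL E S W).ncard := hCw_le'
                _ ≤ max (CL E S W).ncard 1 := le_max_left _ _
            · omega
end Dev5
section Dev6
variable {E : V → V → Prop}

lemma top_main [Fintype V] (hG : Acyclic E) :
    ∀ (m : ℕ) (S : Set V), Sᶜ.ncard ≤ m → Bset E S = ∅ →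
      ∃ L : List V, L.Nodup ∧ (∀ v, v ∈ L ↔ v ∉ S) ∧ TopoFrom E S L ∧
        ∀ p q : List V, L = p ++ q →
          Cert (doutMax E) (Fintype.card V) 0 ((Bset E (S ∪ lset p)).ncard) := by
  intro m
  induction m with
  | zero =>
    intro S hm hBS
    have hSc : Sᶜ = ∅ := by
      rw [← Set.ncard_eq_zero (Set.toFinite _)]; omega
    refine ⟨[], by simp, ?_, by simp, ?_⟩
    · intro v
      simp only [List.not_mem_nil, false_iff, not_not]
      by_contra hv
      exact absurd (show v ∈ Sᶜ from hv) (hSc ▸ Set.notMem_empty v)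
    · rintro p q hpq
      obtain rfl : p = [] := (List.append_eq_nil_iff.1 hpq.symm).1
      refine ⟨[], 0, by norm_num, by simp, by simp, ?_⟩
      simp only [lset_nil, Set.union_empty, hBS, List.map_nil, List.sum_nil]
      simp [Set.ncard_empty]
  | succ m ih =>
    intro S hm hBS
    rcases Set.eq_empty_or_nonempty Sᶜ with hSc | hSne
    · refine ⟨[], by simp, ?_, by simp, ?_⟩
      · intro v
        simp only [List.not_mem_nil, false_iff, not_not]
        by_contra hv
        exact absurd (show v ∈ Sᶜ from hv) (hSc ▸ Set.notMem_empty v)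
      · rintro p q hpq
        obtain rfl : p = [] := (List.append_eq_nil_iff.1 hpq.symm).1
        refine ⟨[], 0, by norm_num, by simp, by simp, ?_⟩
        simp only [lset_nil, Set.union_empty, hBS, List.map_nil, List.sum_nil]
        simp [Set.ncard_empty]
    obtain ⟨s, hsS, hpres⟩ := exists_source hG hSne
    set S₁ := S ∪ {s} with hS₁
    set W₁ := Bset E S₁ with hW₁
    have hW₁NW : W₁ = NW E S s := by
      ext x
      simp only [hW₁, Bset, Set.mem_setOf_eq, NW]
      constructor
      · intro hx
        refine ⟨hx, fun hr => ?_⟩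
        exact absurd (show x ∈ Bset E S from hr) (hBS ▸ Set.notMem_empty x)
      · exact fun hx => hx.1
    have hm₁ : (S₁ᶜ).ncard ≤ m := by
      have hset : S₁ᶜ = Sᶜ \ {s} := by
        rw [hS₁]; ext x; simp [Set.mem_compl_iff, and_comm]
      rw [hset, Set.ncard_diff_singleton_of_mem (show s ∈ Sᶜ from hsS)]
      omega
    have hW₁R : ∀ v ∈ W₁, Ready E S₁ v := fun v hv => hv
    have hW₁c : W₁.ncard ≤ doutMax E := by
      rw [hW₁NW]
      exact le_trans (Set.ncard_le_ncard nw_subset_suc (Set.toFinite _)) (ncard_suc_le_doutMax s)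
    obtain ⟨L₁, hnd₁, hmem₁, htop₁, hcert₁⟩ := rec_main hG m S₁ W₁ hm₁ hW₁R hW₁c
    have hL₁ : lset L₁ = CL E S₁ W₁ := Set.ext fun v => hmem₁ v
    have hnb₁ : ∀ x ∈ CL E S₁ W₁, x ∉ S₁ :=
      fun x hx => hx.not_in_base (fun v hv => (hW₁R v hv).1)
    set C := CL E S₁ W₁ with hC
    set S₂ := S₁ ∪ C with hS₂
    have hBS₂ : Bset E S₂ = ∅ := bset_closure_full (le_refl _)
    have hm₂ : (S₂ᶜ).ncard ≤ m := by
      have hsub : S₂ᶜ ⊆ S₁ᶜ := Set.compl_subset_compl.2 Set.subset_union_left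
      exact le_trans (Set.ncard_le_ncard hsub (Set.toFinite _)) hm₁
    obtain ⟨L₂, hnd₂, hmem₂, htop₂, hcert₂⟩ := ih S₂ hm₂ hBS₂
    have hncl : (CL E S₁ W₁).ncard ≤ Fintype.card V := by
      calc (CL E S₁ W₁).ncard ≤ (Set.univ : Set V).ncard :=
            Set.ncard_le_ncard (Set.subset_univ _) (Set.toFinite _)
        _ = Fintype.card V := by rw [Set.ncard_univ, Nat.card_eq_fintype_card]
    refine ⟨s :: L₁ ++ L₂, ?_, ?_, ?_, ?_⟩
    · refine List.nodup_cons.2 ⟨?_, List.Nodup.append hnd₁ hnd₂ ?_⟩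
      · intro hmem
        rcases List.mem_append.1 hmem with h | h
        · exact hnb₁ s ((hmem₁ s).1 h) (Set.mem_union_right _ rfl)
        · exact ((hmem₂ s).1 h) (Set.mem_union_left _ (Set.mem_union_right _ rfl))
      · intro a ha hb
        exact ((hmem₂ a).1 hb) (Set.mem_union_right _ ((hmem₁ a).1 ha))
    · intro v
      constructor
      · intro hv
        rcases List.mem_cons.1 hv with rfl | hv
        · exact hsS
        · rcases List.mem_append.1 hv with h | h
          · exact fun hS => hnb₁ v ((hmem₁ v).1 h) (Set.mem_union_left _ hS)
          · exact fun hS => ((hmem₂ v).1 h)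
              (Set.mem_union_left _ (Set.mem_union_left _ hS))
      · intro hv
        by_cases h2 : v ∈ S₂
        · rcases h2 with h2 | h2
          · rcases h2 with h2 | h2
            · exact absurd h2 hv
            · exact List.mem_cons.2 (Or.inl h2)
          · exact List.mem_cons.2 (Or.inr (List.mem_append.2 (Or.inl ((hmem₁ v).2 h2))))
        · exact List.mem_cons.2 (Or.inr (List.mem_append.2 (Or.inr ((hmem₂ v).2 h2))))
    · have h2 : TopoFrom E (S₁ ∪ lset L₁) L₂ := by rw [hL₁, ← hS₂]; exact htop₂
      exact ⟨hpres, topoFrom_append.2 ⟨htop₁, h2⟩⟩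
    · intro p q hpq
      rcases p with _ | ⟨a, p'⟩
      · simp only [lset_nil, Set.union_empty, hBS]
        exact ⟨[], 0, by norm_num, by simp, by simp, by simp [Set.ncard_empty]⟩
      · rw [List.cons_append] at hpq
        injection hpq with ha hpq'
        subst ha
        rcases List.append_eq_append_iff.1 hpq' with ⟨c', hc1, hc2⟩ | ⟨a', ha1, ha2⟩
        · -- continuation: p' = L₁ ++ c', L₂ = c' ++ q
          have hstate' : S ∪ lset (s :: p') = S₂ ∪ lset c' := by
            rw [lset_cons, hc1, lset_append, hS₂, ← hL₁, hS₁]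
            simp [Set.union_assoc, Set.insert_union]
          rw [hstate']
          exact hcert₂ c' q hc2
        · -- prefix of L₁ : L₁ = p' ++ a'
          have hstate' : S ∪ lset (s :: p') = S₁ ∪ lset p' := by
            rw [lset_cons, hS₁, Set.union_assoc]
          rw [hstate']
          have := hcert₁ p' a' ha1
          refine this.weaken hncl ?_
          rw [hW₁, Set.diff_self]
          simp [Set.ncard_empty]
end Dev6
section Dev7
variable {E : V → V → Prop}

lemma topoFrom_get {S : Set V} {L : List V} (h : TopoFrom E S L) :
    ∀ i : Fin L.length, pre E (L.get i) ⊆ S ∪ lset (L.take i.1) := by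
  induction L generalizing S with
  | nil => exact fun i => absurd i.isLt (by simp)
  | cons a t ihl =>
    rintro ⟨i, hi⟩
    cases i with
    | zero =>
      intro x hx
      exact Set.mem_union_left _ (h.1 hx)
    | succ j =>
      have hj : j < t.length := by simpa using hi
      have := ihl h.2 ⟨j, hj⟩
      intro x hx
      have hx' := this hx
      simp only [List.take_succ_cons, lset_cons]
      rcases hx' with hx' | hx'
      · rcases hx' with hx' | hx'
        · exact Or.inl hx'
        · exact Or.inr (Or.inl hx')
      · exact Or.inr (Or.inr hx')

lemma boundary_eq (L : List V) : boundary (rtop E) L = Bset E (lset L) := by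
  ext v
  simp only [boundary, rtop, Set.mem_setOf_eq, Set.mem_singleton_iff, Bset, Ready,
    exists_eq_left, mem_lset]
  constructor
  · rintro ⟨h1, h2, h3⟩
    exact ⟨h1, Set.nonempty_iff_ne_empty.2 h2, h3⟩
  · rintro ⟨h1, h2, h3⟩
    exact ⟨h1, Set.nonempty_iff_ne_empty.1 h2, h3⟩

end Dev7

theorem stmt_11 {V : Type u} [Fintype V] [DecidableEq V] (E : V → V → Prop)
    (hG : Acyclic E) :
    ∃ ψ : List V, IsRVisit (rtop E) ψ ∧
      (doutMax E = 0 → bnd (rtop E) ψ = 0) ∧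
      (doutMax E = 1 → bnd (rtop E) ψ = 1) ∧
      (∀ D : ℕ, 2 ≤ D → doutMax E ≤ D →
        (bnd (rtop E) ψ : ℝ) ≤
          ((D : ℝ) - 1) / Real.logb 2 (D : ℝ) * Real.logb 2 (Fintype.card V : ℝ) + 1) := by
  have hB0 : Bset E (∅ : Set V) = ∅ := by
    ext v
    simp only [Set.mem_empty_iff_false, iff_false]
    rintro ⟨h1, ⟨u, hu⟩, hsub⟩
    exact hsub hu
  have hm0 : ((∅ : Set V)ᶜ).ncard ≤ Fintype.card V := by
    rw [Set.compl_empty, Set.ncard_univ, Nat.card_eq_fintype_card]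
  obtain ⟨ψ, hnd, hmem, htop, hcert⟩ := top_main hG (Fintype.card V) ∅ hm0 hB0
  have hmemψ : ∀ v : V, v ∈ ψ := fun v => (hmem v).2 (Set.notMem_empty v)
  -- the certificate in convenient form
  have hcert' : ∀ i : ℕ, Cert (doutMax E) (Fintype.card V) 0
      ((boundary (rtop E) (ψ.take i)).ncard) := by
    intro i
    rw [boundary_eq]
    have := hcert (ψ.take i) (ψ.drop i) (List.take_append_drop i ψ).symm
    rwa [Set.empty_union] at this
  have htopo_take : ∀ i : Fin ψ.length, pre E (ψ.get i) ⊆ lset (ψ.take i.1) := by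
    intro i
    have := topoFrom_get htop i
    rwa [Set.empty_union] at this
  refine ⟨ψ, ⟨⟨hnd, ?_⟩, hmemψ⟩, ?_, ?_, ?_⟩
  · -- r-sequence
    intro i
    exact ⟨pre E (ψ.get i), rfl, fun u hu => htopo_take i hu⟩
  · -- (a) doutMax = 0
    intro h0
    have hnoedge : ∀ u v : V, ¬ E u v := by
      intro u v huv
      have h1 : (suc E u).ncard = 0 := Nat.le_zero.1 (h0 ▸ ncard_suc_le_doutMax u)
      have h2 : suc E u = ∅ := (Set.ncard_eq_zero (Set.toFinite _)).1 h1
      exact absurd (show v ∈ suc E u from huv) (h2 ▸ Set.notMem_empty v)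
    have hbd : ∀ i : ℕ, (boundary (rtop E) (ψ.take i)).ncard = 0 := by
      intro i
      rw [boundary_eq]
      have : Bset E (lset (ψ.take i)) = ∅ := by
        ext v
        simp only [Set.mem_empty_iff_false, iff_false]
        rintro ⟨h1, ⟨u, hu⟩, hsub⟩
        exact hnoedge u v hu
      rw [this, Set.ncard_empty]
    refine Nat.le_zero.1 (Finset.sup_le fun i _ => le_of_eq (hbd i))
  · -- (b) doutMax = 1
    intro h1
    apply le_antisymm
    · refine Finset.sup_le fun i _ => ?_
      obtain ⟨J, ε, hε, hJ, hJp, hb⟩ := hcert' i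
      have hJnil : J = [] := by
        cases J with
        | nil => rfl
        | cons j t =>
          have := hJ j (by simp)
          omega
      subst hJnil
      simp only [List.map_nil, List.sum_nil] at hb
      omega
    · -- bnd ≥ 1
      have hVne : Nonempty V := by
        by_contra hne
        haveI : IsEmpty V := ⟨fun v => hne ⟨v⟩⟩
        rw [doutMax, Finset.univ_eq_empty, Finset.sup_empty] at h1
        exact absurd h1 (by simp)
      obtain ⟨v, _, hv⟩ := Finset.exists_mem_eq_sup (Finset.univ : Finset V)
        Finset.univ_nonempty (fun v : V => (suc E v).ncard)
      have hvcard : (suc E v).ncard = 1 := by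
        rw [← hv]; exact h1
      obtain ⟨u, hu⟩ := (Set.ncard_pos (Set.toFinite _)).1 (by omega : 0 < (suc E v).ncard)
      obtain ⟨i, hiu⟩ := List.get_of_mem (hmemψ u)
      have hpreu : v ∈ pre E u := hu
      have hpre_take : pre E u ⊆ lset (ψ.take i.1) := by
        rw [← hiu]; exact htopo_take i
      have hi1 : 1 ≤ i.1 := by
        by_contra hi0
        have hz : i.1 = 0 := by omega
        have hvmem := hpre_take hpreu
        rw [hz] at hvmem
        simp [lset] at hvmem
      have hinotin : u ∉ ψ.take i.1 := by
        intro hmem'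
        have hsplit := (List.take_append_drop i.1 ψ)
        have hnd' : (ψ.take i.1 ++ ψ.drop i.1).Nodup := by rw [hsplit]; exact hnd
        have hdisj := (List.nodup_append.1 hnd').2.2
        have hdrop : u ∈ ψ.drop i.1 := by
          have hlt : i.1 < ψ.length := i.isLt
          rw [List.drop_eq_getElem_cons hlt, ← hiu, List.get_eq_getElem]
          exact List.mem_cons_self
        exact hdisj u hmem' u hdrop rfl
      have hub : u ∈ boundary (rtop E) (ψ.take i.1) := by
        rw [boundary_eq]
        exact ⟨hinotin, ⟨v, hpreu⟩, hpre_take⟩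
      have hpos : 1 ≤ (boundary (rtop E) (ψ.take i.1)).ncard :=
        (Set.ncard_pos (Set.toFinite _)).2 ⟨u, hub⟩
      calc 1 ≤ (boundary (rtop E) (ψ.take i.1)).ncard := hpos
        _ ≤ bnd (rtop E) ψ := by
            show _ ≤ (Finset.Icc 1 ψ.length).sup fun j => (boundary (rtop E) (ψ.take j)).ncard
            exact Finset.le_sup (f := fun j => (boundary (rtop E) (ψ.take j)).ncard)
              (Finset.mem_Icc.2 ⟨hi1, le_of_lt i.isLt⟩)
  · -- (c)
    intro D hD2 hDd
    set n := Fintype.card V with hn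
    have hD1R : (1:ℝ) < (D:ℝ) := by exact_mod_cast hD2
    have hlogD : 0 < Real.log D := Real.log_pos hD1R
    have hlog2 : 0 < Real.log 2 := Real.log_pos one_lt_two
    have hcoef : ((D:ℝ) - 1) / Real.logb 2 D * Real.logb 2 n
        = ((D:ℝ) - 1) * Real.log n / Real.log D := by
      rw [Real.logb, Real.logb]
      field_simp
    have hlogn_nonneg : 0 ≤ Real.log n := by
      rcases Nat.eq_zero_or_pos n with h | h
      · rw [h]; simp
      · exact Real.log_natCast_nonneg n
    -- bound each term
    have hterm : ∀ i : ℕ, ((boundary (rtop E) (ψ.take i)).ncard : ℝ)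
        ≤ ((D:ℝ) - 1) * Real.log n / Real.log D + 1 := by
      intro i
      obtain ⟨J, ε, hε, hJ, hJp, hb⟩ := hcert' i
      have hJD : ∀ j ∈ J, 2 ≤ j ∧ j ≤ D := fun j hj =>
        ⟨(hJ j hj).1, le_trans (hJ j hj).2 hDd⟩
      have hsb := sum_bound D hD2 J hJD
      have hprod_log : Real.log ((J.prod : ℕ) : ℝ) ≤ Real.log n := by
        rcases Nat.eq_zero_or_pos n with h | h
        · have : J.prod ≤ 1 := by
            have := hJp
            rw [h] at this
            simpa using this
          have hlogle : Real.log ((J.prod : ℕ) : ℝ) ≤ 0 := by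
            apply Real.log_nonpos
            · positivity
            · exact_mod_cast this
          rw [h]
          simpa using hlogle
        · have hple : J.prod ≤ n := by
            have := hJp
            have hmax : max n 1 = n := by omega
            rwa [hmax] at this
          have hppos : 0 < J.prod := one_le_prod J fun j hj => by
            have := (hJD j hj).1; omega
          apply Real.log_le_log (by exact_mod_cast hppos)
          exact_mod_cast hple
      have hsum_le : (((J.map (fun j => j - 1)).sum : ℕ) : ℝ)
          ≤ ((D:ℝ) - 1) * Real.log n / Real.log D := by
        rw [le_div_iff₀ hlogD]
        calc (((J.map (fun j => j - 1)).sum : ℕ) : ℝ) * Real.log D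
            ≤ ((D:ℝ) - 1) * Real.log ((J.prod : ℕ) : ℝ) := hsb
          _ ≤ ((D:ℝ) - 1) * Real.log n :=
              mul_le_mul_of_nonneg_left hprod_log (by linarith)
      have hbR : ((boundary (rtop E) (ψ.take i)).ncard : ℝ)
          ≤ (ε : ℝ) + (((J.map (fun j => j - 1)).sum : ℕ) : ℝ) := by
        have : (boundary (rtop E) (ψ.take i)).ncard ≤ ε + (J.map (fun j => j - 1)).sum := by
          omega
        exact_mod_cast this
      have hεR : (ε : ℝ) ≤ 1 := by exact_mod_cast hε
      linarith
    rw [hcoef]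
    rcases Finset.eq_empty_or_nonempty (Finset.Icc 1 ψ.length) with hIcc | hIcc
    · rw [bnd, hIcc, Finset.sup_empty]
      simp only [Nat.cast_zero, bot_eq_zero]
      have : (0:ℝ) ≤ ((D:ℝ) - 1) * Real.log n / Real.log D :=
        div_nonneg (mul_nonneg (by linarith) hlogn_nonneg) (le_of_lt hlogD)
      norm_num
      linarith
    · obtain ⟨i₀, _, hi₀⟩ := Finset.exists_mem_eq_sup _ hIcc
        (fun i => (boundary (rtop E) (ψ.take i)).ncard)
      rw [bnd, hi₀]
      exact hterm i₀
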